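/- Let μ be a probability distribution on subsets of [n] whose generating polynomial g_μ(z) = Σ_S μ(S) Πᵢ∈S zᵢ is log-concave on the positive orthant, and let μ₁,...,μₙ be its marginals. Then H(μ) ≥ Σᵢ₌₁ⁿ μᵢ log(1/μᵢ). -/

import Mathlib

/-- The Shannon entropy of a distribution on subsets of `[n]`
(with the convention `0 · log (1/0) = 0`, automatic since `Real.log 0 = 0`). -/
noncomputable def setEntropy {n : ℕ} (μ : Finset (Fin n) → ℝ) : ℝ :=
  ∑ S : Finset (Fin n), μ S * Real.log (1 / μ S)

/-- The marginal probability `μᵢ = P_{S∼μ}[i ∈ S]`. -/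
noncomputable def marginal {n : ℕ} (μ : Finset (Fin n) → ℝ) (i : Fin n) : ℝ :=
  ∑ S : Finset (Fin n), if i ∈ S then μ S else 0

/-- The multiaffine generating polynomial of `μ`, as a function:
`g_μ(z) = ∑_S μ(S) ∏_{i ∈ S} zᵢ`. -/
noncomputable def genFun {n : ℕ} (μ : Finset (Fin n) → ℝ) (z : Fin n → ℝ) : ℝ :=
  ∑ S : Finset (Fin n), μ S * ∏ i ∈ S, z i

open Finset Real

private lemma marginal_nonneg {n : ℕ} (μ : Finset (Fin n) → ℝ) (hnn : ∀ S, 0 ≤ μ S)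
    (i : Fin n) : 0 ≤ marginal μ i :=
  Finset.sum_nonneg fun S _ => by by_cases h : i ∈ S <;> simp [h, hnn S]

private lemma mu_le_marginal {n : ℕ} (μ : Finset (Fin n) → ℝ) (hnn : ∀ S, 0 ≤ μ S)
    {i : Fin n} {S : Finset (Fin n)} (hi : i ∈ S) : μ S ≤ marginal μ i := by
  have := Finset.single_le_sum (f := fun T : Finset (Fin n) => if i ∈ T then μ T else 0)
    (fun T _ => by by_cases h : i ∈ T <;> simp [h, hnn T]) (Finset.mem_univ S)
  simpa [marginal, hi] using this

/-- Fubini-type identity: `∑_S μ(S) ∑_{i∈S} a i = ∑_i μᵢ a i`. -/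
private lemma sum_mu_inner {n : ℕ} (μ : Finset (Fin n) → ℝ) (a : Fin n → ℝ) :
    ∑ S : Finset (Fin n), μ S * ∑ i ∈ S, a i = ∑ i : Fin n, marginal μ i * a i := by
  calc ∑ S : Finset (Fin n), μ S * ∑ i ∈ S, a i
      = ∑ S : Finset (Fin n), ∑ i : Fin n, (if i ∈ S then μ S else 0) * a i := by
        refine Finset.sum_congr rfl fun S _ => ?_
        simp [ite_mul, Finset.sum_ite_mem, Finset.mul_sum]
    _ = ∑ i : Fin n, ∑ S : Finset (Fin n), (if i ∈ S then μ S else 0) * a i :=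
        Finset.sum_comm
    _ = ∑ i : Fin n, marginal μ i * a i := by
        refine Finset.sum_congr rfl fun i _ => ?_
        rw [marginal, Finset.sum_mul]

private lemma genFun_one {n : ℕ} (μ : Finset (Fin n) → ℝ)
    (hsum : ∑ S : Finset (Fin n), μ S = 1) :
    genFun μ (1 : Fin n → ℝ) = 1 := by
  simp [genFun, hsum]

/-- The tangent-line bound obtained from log-concavity at `𝟙`. -/
private lemma genFun_le_exp {n : ℕ} (μ : Finset (Fin n) → ℝ)
    (hnn : ∀ S, 0 ≤ μ S) (hsum : ∑ S : Finset (Fin n), μ S = 1)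
    (hlc : ∀ v w : Fin n → ℝ, (∀ i, 0 ≤ v i) → (∀ i, 0 ≤ w i) →
      ∀ l : ℝ, 0 ≤ l → l ≤ 1 →
        (genFun μ v) ^ l * (genFun μ w) ^ (1 - l) ≤ genFun μ (l • v + (1 - l) • w))
    (z : Fin n → ℝ) (hz : ∀ i, 0 ≤ z i) :
    genFun μ z ≤ Real.exp (∑ i : Fin n, marginal μ i * (z i - 1)) := by
  set A : ℝ := ∑ i : Fin n, marginal μ i * (z i - 1) with hA
  have hg0 : 0 ≤ genFun μ z :=
    Finset.sum_nonneg fun S _ => mul_nonneg (hnn S) (Finset.prod_nonneg fun i _ => hz i)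
  rcases eq_or_lt_of_le hg0 with hg | hg
  · rw [← hg]; exact (Real.exp_pos A).le
  set c : Finset (Fin n) → ℝ := fun S => ∑ i ∈ S, (z i - 1) with hc
  set F : ℝ → ℝ := fun l => ∑ S : Finset (Fin n), μ S * Real.exp (l * c S) with hF
  have hsumc : ∑ S : Finset (Fin n), μ S * c S = A := sum_mu_inner μ _
  have key : ∀ l : ℝ, 0 < l → l ≤ 1 → (genFun μ z) ^ l ≤ F l := by
    intro l hl0 hl1
    have h1 := hlc z (1 : Fin n → ℝ) hz (fun _ => zero_le_one) l hl0.le hl1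
    rw [genFun_one μ hsum, Real.one_rpow, mul_one] at h1
    refine h1.trans ?_
    refine Finset.sum_le_sum fun S _ => ?_
    refine mul_le_mul_of_nonneg_left ?_ (hnn S)
    calc ∏ i ∈ S, (l • z + (1 - l) • (1 : Fin n → ℝ)) i
        ≤ ∏ i ∈ S, Real.exp (l * (z i - 1)) := by
          refine Finset.prod_le_prod (fun i _ => ?_) (fun i _ => ?_)
          · have := hz i
            simp only [Pi.add_apply, Pi.smul_apply, Pi.one_apply, smul_eq_mul, mul_one]
            nlinarith
          · have h2 : l * (z i - 1) + 1 ≤ Real.exp (l * (z i - 1)) := Real.add_one_le_exp _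
            simp only [Pi.add_apply, Pi.smul_apply, Pi.one_apply, smul_eq_mul, mul_one]
            nlinarith
      _ = Real.exp (l * c S) := by
          rw [← Real.exp_sum, hc, Finset.mul_sum]
  have hF0 : F 0 = 1 := by simp [hF, hsum]
  have hFd : HasDerivAt F A 0 := by
    rw [← hsumc]
    refine HasDerivAt.fun_sum fun S _ => ?_
    have : HasDerivAt (fun l : ℝ => Real.exp (l * c S)) (c S) 0 := by
      simpa using ((hasDerivAt_id (0:ℝ)).mul_const (c S)).exp
    simpa [mul_comm] using this.const_mul (μ S)
  have hlogFd : HasDerivAt (fun l => Real.log (F l)) A 0 := by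
    have := hFd.log (by rw [hF0]; norm_num)
    simpa [hF0] using this
  have hslope : ∀ l : ℝ, 0 < l → l ≤ 1 →
      Real.log (genFun μ z) ≤ slope (fun l => Real.log (F l)) 0 l := by
    intro l h0 h1
    have h2 : Real.log ((genFun μ z) ^ l) ≤ Real.log (F l) :=
      Real.log_le_log (Real.rpow_pos_of_pos hg l) (key l h0 h1)
    rw [Real.log_rpow hg] at h2
    rw [slope_def_field, hF0, Real.log_one, sub_zero, sub_zero, div_eq_inv_mul]
    calc Real.log (genFun μ z) = l⁻¹ * (l * Real.log (genFun μ z)) := by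
          field_simp
      _ ≤ l⁻¹ * Real.log (F l) := mul_le_mul_of_nonneg_left h2 (inv_nonneg.mpr h0.le)
  have htend : Filter.Tendsto (slope (fun l => Real.log (F l)) 0)
      (nhdsWithin 0 (Set.Ioi 0)) (nhds A) := by
    have := hasDerivAt_iff_tendsto_slope.mp hlogFd
    exact this.mono_left (nhdsWithin_mono 0 (fun x hx => ne_of_gt hx))
  have hlog : Real.log (genFun μ z) ≤ A := by
    refine ge_of_tendsto htend ?_
    filter_upwards [Ioc_mem_nhdsGT_of_mem (Set.mem_Ico.mpr ⟨le_refl (0:ℝ), zero_lt_one⟩)]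
      with l hl
    exact hslope l hl.1 hl.2
  calc genFun μ z = Real.exp (Real.log (genFun μ z)) := (Real.exp_log hg).symm
    _ ≤ Real.exp A := Real.exp_le_exp.mpr hlog

/-- The coefficient bound. -/
private lemma log_mu_le {n : ℕ} (μ : Finset (Fin n) → ℝ)
    (hnn : ∀ S, 0 ≤ μ S) (hsum : ∑ S : Finset (Fin n), μ S = 1)
    (hlc : ∀ v w : Fin n → ℝ, (∀ i, 0 ≤ v i) → (∀ i, 0 ≤ w i) →
      ∀ l : ℝ, 0 ≤ l → l ≤ 1 →
        (genFun μ v) ^ l * (genFun μ w) ^ (1 - l) ≤ genFun μ (l • v + (1 - l) • w))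
    {S : Finset (Fin n)} (hS : 0 < μ S) :
    Real.log (μ S) ≤ (∑ i ∈ S, Real.log (marginal μ i)) +
      ((S.card : ℝ) - ∑ i : Fin n, marginal μ i) := by
  set m : Fin n → ℝ := fun i => marginal μ i with hm
  have hmpos : ∀ i ∈ S, 0 < m i := fun i hi => lt_of_lt_of_le hS (mu_le_marginal μ hnn hi)
  set z : Fin n → ℝ := fun i => if i ∈ S then (m i)⁻¹ else 0 with hzdef
  have hz : ∀ i, 0 ≤ z i := by
    intro i; simp only [hzdef]
    split
    · exact inv_nonneg.mpr (marginal_nonneg μ hnn i)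
    · exact le_rfl
  have hup := genFun_le_exp μ hnn hsum hlc z hz
  have hAval : ∑ i : Fin n, marginal μ i * (z i - 1) =
      (S.card : ℝ) - ∑ i : Fin n, marginal μ i := by
    simp only [mul_sub, Finset.sum_sub_distrib, mul_one]
    congr 1
    have : ∀ i : Fin n, marginal μ i * z i = if i ∈ S then 1 else 0 := by
      intro i
      by_cases h : i ∈ S
      · simp only [hzdef, if_pos h]
        exact mul_inv_cancel₀ (ne_of_gt (hmpos i h))
      · simp [hzdef, h]
    rw [Finset.sum_congr rfl fun i _ => this i]
    simp [Finset.sum_ite_mem]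
  have hlow : μ S * ∏ i ∈ S, (m i)⁻¹ ≤ genFun μ z := by
    have h5 := Finset.single_le_sum
      (f := fun T : Finset (Fin n) => μ T * ∏ i ∈ T, z i)
      (fun T _ => mul_nonneg (hnn T) (Finset.prod_nonneg fun i _ => hz i))
      (Finset.mem_univ S)
    have hprod : ∏ i ∈ S, z i = ∏ i ∈ S, (m i)⁻¹ :=
      Finset.prod_congr rfl fun i hi => by simp [hzdef, hi]
    have h5' : μ S * ∏ i ∈ S, z i ≤ genFun μ z := h5
    rw [hprod] at h5'
    exact h5'
  have hprodpos : 0 < ∏ i ∈ S, m i := Finset.prod_pos hmpos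
  have hkey : μ S ≤ Real.exp ((S.card : ℝ) - ∑ i : Fin n, marginal μ i) * ∏ i ∈ S, m i := by
    have h3 : μ S * ∏ i ∈ S, (m i)⁻¹ ≤
        Real.exp ((S.card : ℝ) - ∑ i : Fin n, marginal μ i) := by
      rw [← hAval]; exact hlow.trans hup
    rw [Finset.prod_inv_distrib] at h3
    calc μ S = μ S * (∏ i ∈ S, m i)⁻¹ * ∏ i ∈ S, m i := by
          field_simp
      _ ≤ Real.exp ((S.card : ℝ) - ∑ i : Fin n, marginal μ i) * ∏ i ∈ S, m i :=
          mul_le_mul_of_nonneg_right h3 hprodpos.le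
  calc Real.log (μ S) ≤ Real.log (Real.exp ((S.card : ℝ) - ∑ i : Fin n, marginal μ i) *
        ∏ i ∈ S, m i) := Real.log_le_log hS hkey
    _ = ((S.card : ℝ) - ∑ i : Fin n, marginal μ i) + Real.log (∏ i ∈ S, m i) := by
        rw [Real.log_mul (Real.exp_ne_zero _) (ne_of_gt hprodpos), Real.log_exp]
    _ = (∑ i ∈ S, Real.log (m i)) + ((S.card : ℝ) - ∑ i : Fin n, marginal μ i) := by
        rw [Real.log_prod (fun i hi => ne_of_gt (hmpos i hi))]; ring

/-- If the generating polynomial of the probability distribution `μ` on subsets of `[n]`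
is log-concave on the positive orthant, then `H(μ) ≥ ∑ᵢ μᵢ log(1/μᵢ)`. -/
theorem setEntropy_ge_of_logConcave
    {n : ℕ} (μ : Finset (Fin n) → ℝ)
    (hnn : ∀ S, 0 ≤ μ S) (hsum : ∑ S : Finset (Fin n), μ S = 1)
    (hlc : ∀ v w : Fin n → ℝ, (∀ i, 0 ≤ v i) → (∀ i, 0 ≤ w i) →
      ∀ l : ℝ, 0 ≤ l → l ≤ 1 →
        (genFun μ v) ^ l * (genFun μ w) ^ (1 - l) ≤ genFun μ (l • v + (1 - l) • w)) :
    ∑ i : Fin n, marginal μ i * Real.log (1 / marginal μ i) ≤ setEntropy μ := by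
  have hM : ∑ S : Finset (Fin n), μ S * (S.card : ℝ) = ∑ i : Fin n, marginal μ i := by
    have := sum_mu_inner μ (fun _ => (1:ℝ))
    simpa using this
  have hL : ∑ S : Finset (Fin n), μ S * ∑ i ∈ S, Real.log (marginal μ i)
      = ∑ i : Fin n, marginal μ i * Real.log (marginal μ i) := sum_mu_inner μ _
  set M : ℝ := ∑ i : Fin n, marginal μ i with hMdef
  simp only [setEntropy, one_div, Real.log_inv, mul_neg]
  rw [Finset.sum_neg_distrib, Finset.sum_neg_distrib, neg_le_neg_iff]
  have step : ∀ S : Finset (Fin n), μ S * Real.log (μ S) ≤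
      μ S * ((∑ i ∈ S, Real.log (marginal μ i)) + ((S.card : ℝ) - M)) := by
    intro S
    rcases (hnn S).eq_or_lt with h | h
    · simp [← h]
    · exact mul_le_mul_of_nonneg_left (log_mu_le μ hnn hsum hlc h) h.le
  calc ∑ S : Finset (Fin n), μ S * Real.log (μ S)
      ≤ ∑ S : Finset (Fin n), μ S * ((∑ i ∈ S, Real.log (marginal μ i)) +
          ((S.card : ℝ) - M)) := Finset.sum_le_sum fun S _ => step S
    _ = (∑ S : Finset (Fin n), μ S * ∑ i ∈ S, Real.log (marginal μ i)) +
          (∑ S : Finset (Fin n), μ S * (S.card : ℝ)) -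
          (∑ S : Finset (Fin n), μ S) * M := by
        simp only [mul_add, mul_sub, Finset.sum_add_distrib, Finset.sum_sub_distrib,
          ← Finset.sum_mul]
        ring
    _ = ∑ i : Fin n, marginal μ i * Real.log (marginal μ i) := by
        rw [hL, hM, hsum, one_mul]
        ring
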